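/- Let A, B, C be Boolean algebras and let f : C → A and g : C → B be injective Boolean algebra homomorphisms. Then there exist a Boolean algebra D and injective Boolean algebra homomorphisms i₁ : A → D and i₂ : B → D with i₁ ∘ f = i₂ ∘ g such that the intersection of the range of i₁ with the range of i₂ equals the range of i₁ ∘ f. (Boolean algebras have disjoint amalgamation.) -/
import Mathlib

universe u v w

open scoped symmDiff

section Aux

variable {α : Type*} [BooleanAlgebra α]

/-- A (not necessarily proper) filter, as a set. -/
def IsFilt (S : Set α) : Prop :=
  ⊤ ∈ S ∧ (∀ a ∈ S, ∀ b ∈ S, a ⊓ b ∈ S) ∧ ∀ a ∈ S, ∀ b, a ≤ b → b ∈ S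

/-- Ultrafilter lemma: every proper filter on a Boolean algebra is contained in the
true-set of a bounded lattice homomorphism to `Prop`. -/
theorem exists_ultra (S : Set α) (hS : IsFilt S) (hbot : (⊥ : α) ∉ S) :
    ∃ x : BoundedLatticeHom α Prop, ∀ a ∈ S, x a := by
  have hchains : ∀ c ⊆ {T : Set α | IsFilt T ∧ (⊥ : α) ∉ T}, IsChain (· ⊆ ·) c →
      c.Nonempty → ∃ ub ∈ {T : Set α | IsFilt T ∧ (⊥ : α) ∉ T}, ∀ s ∈ c, s ⊆ ub := by
    intro c hc hchain hne
    refine ⟨⋃₀ c, ⟨⟨?_, ?_, ?_⟩, ?_⟩, fun s hs => Set.subset_sUnion_of_mem hs⟩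
    · obtain ⟨T, hT⟩ := hne
      exact ⟨T, hT, (hc hT).1.1⟩
    · rintro a ⟨T1, hT1, ha⟩ b ⟨T2, hT2, hb⟩
      rcases hchain.total hT1 hT2 with h | h
      · exact ⟨T2, hT2, (hc hT2).1.2.1 a (h ha) b hb⟩
      · exact ⟨T1, hT1, (hc hT1).1.2.1 a ha b (h hb)⟩
    · rintro a ⟨T, hT, ha⟩ b hab
      exact ⟨T, hT, (hc hT).1.2.2 a ha b hab⟩
    · rintro ⟨T, hT, hbT⟩
      exact (hc hT).2 hbT
  obtain ⟨M, hSM, hM⟩ := zorn_subset_nonempty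
      {T : Set α | IsFilt T ∧ (⊥ : α) ∉ T} hchains S ⟨hS, hbot⟩
  have hMf : IsFilt M := hM.prop.1
  have hMb : (⊥ : α) ∉ M := hM.prop.2
  have key : ∀ a : α, a ∉ M → aᶜ ∈ M := by
    intro a ha
    by_cases hbM' : (⊥ : α) ∈ {y : α | ∃ m ∈ M, m ⊓ a ≤ y}
    · obtain ⟨m, hm, hle⟩ := hbM'
      have hma : m ≤ aᶜ :=
        (disjoint_iff.mpr (le_bot_iff.mp hle)).le_compl_right
      exact hMf.2.2 m hm aᶜ hma
    · exfalso
      have hM'f : IsFilt {y : α | ∃ m ∈ M, m ⊓ a ≤ y} := by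
        refine ⟨⟨⊤, hMf.1, le_top⟩, ?_, ?_⟩
        · rintro x ⟨m1, hm1, h1⟩ y ⟨m2, hm2, h2⟩
          refine ⟨m1 ⊓ m2, hMf.2.1 _ hm1 _ hm2, ?_⟩
          refine le_inf ?_ ?_
          · exact le_trans (inf_le_inf_right a inf_le_left) h1
          · exact le_trans (inf_le_inf_right a inf_le_right) h2
        · rintro x ⟨m, hm, hle⟩ y hxy
          exact ⟨m, hm, hle.trans hxy⟩
      have hsub : M ⊆ {y : α | ∃ m ∈ M, m ⊓ a ≤ y} :=
        fun m hm => ⟨m, hm, inf_le_left⟩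
      have := hM.eq_of_ge (y := {y : α | ∃ m ∈ M, m ⊓ a ≤ y}) ⟨hM'f, hbM'⟩ hsub
      apply ha
      rw [← this]
      exact ⟨⊤, hMf.1, by simpa using le_refl a⟩
  have hnotboth : ∀ a : α, a ∈ M → aᶜ ∈ M → False := by
    intro a h1 h2
    have := hMf.2.1 a h1 aᶜ h2
    rw [inf_compl_eq_bot] at this
    exact hMb this
  have hprime : ∀ a b : α, a ⊔ b ∈ M → a ∈ M ∨ b ∈ M := by
    intro a b hab
    by_contra hn
    push_neg at hn
    have h3 : aᶜ ⊓ bᶜ ∈ M := hMf.2.1 _ (key a hn.1) _ (key b hn.2)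
    rw [← compl_sup] at h3
    exact hnotboth _ hab h3
  refine ⟨{ toFun := fun a => a ∈ M
            map_sup' := fun a b => propext ⟨fun h => hprime a b h,
              fun h => h.elim (fun h => hMf.2.2 a h _ le_sup_left)
                (fun h => hMf.2.2 b h _ le_sup_right)⟩
            map_inf' := fun a b => propext ⟨fun h =>
                ⟨hMf.2.2 _ h _ inf_le_left, hMf.2.2 _ h _ inf_le_right⟩,
              fun h => hMf.2.1 a h.1 b h.2⟩
            map_top' := propext ⟨fun _ => trivial, fun _ => hMf.1⟩
            map_bot' := propext ⟨fun h => hMb h, False.elim⟩ },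
    fun a ha => hSM ha⟩

theorem hom_compl_iff (u : BoundedLatticeHom α Prop) (c : α) : u cᶜ ↔ ¬ u c := by
  rw [map_compl' u c]
  exact Iff.rfl

/-- Extension of a `Prop`-valued homomorphism along a map, together with an extra
element, given compatibility. -/
theorem exists_extend {B C : Type*} [BooleanAlgebra B] [BooleanAlgebra C]
    (g : BoundedLatticeHom C B) (u : BoundedLatticeHom C Prop) (b₀ : B)
    (hpro : ∀ c, u c → b₀ ⊓ g c ≠ ⊥) :
    ∃ y : BoundedLatticeHom B Prop, y b₀ ∧ ∀ c, y (g c) ↔ u c := by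
  have hfilt : IsFilt {w : B | ∃ c, u c ∧ b₀ ⊓ g c ≤ w} := by
    refine ⟨⟨⊤, by rw [map_top]; trivial, le_top⟩, ?_, ?_⟩
    · rintro w1 ⟨c1, hc1, h1⟩ w2 ⟨c2, hc2, h2⟩
      refine ⟨c1 ⊓ c2, by rw [map_inf]; exact ⟨hc1, hc2⟩, ?_⟩
      rw [map_inf]
      refine le_inf ?_ ?_
      · exact le_trans (inf_le_inf_left b₀ inf_le_left) h1
      · exact le_trans (inf_le_inf_left b₀ inf_le_right) h2
    · rintro w ⟨c, hc, hle⟩ w' hw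
      exact ⟨c, hc, hle.trans hw⟩
  have hb : (⊥ : B) ∉ {w : B | ∃ c, u c ∧ b₀ ⊓ g c ≤ w} := by
    rintro ⟨c, hc, hle⟩
    exact hpro c hc (le_bot_iff.mp hle)
  obtain ⟨y, hy⟩ := exists_ultra _ hfilt hb
  refine ⟨y, hy b₀ ⟨⊤, by rw [map_top]; trivial, by simpa using inf_le_left⟩, ?_⟩
  intro c
  constructor
  · intro hygc
    by_contra hnu
    have hucc : u cᶜ := (hom_compl_iff u c).mpr hnu
    have h2 : y ((g c)ᶜ) := by
      rw [← map_compl']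
      exact hy _ ⟨cᶜ, hucc, inf_le_right⟩
    exact (hom_compl_iff y (g c)).mp h2 hygc
  · intro huc
    exact hy _ ⟨c, huc, inf_le_right⟩

/-- The interpolation/separation lemma behind disjoint amalgamation. -/
theorem interp {A : Type u} {B : Type v} {C : Type w}
    [BooleanAlgebra A] [BooleanAlgebra B] [BooleanAlgebra C]
    (f : BoundedLatticeHom C A) (g : BoundedLatticeHom C B) (a : A) (b : B)
    (h : ∀ (x : BoundedLatticeHom A Prop) (y : BoundedLatticeHom B Prop),
      x.comp f = y.comp g → x a → y b) :
    ∃ c, a ≤ f c ∧ g c ≤ b := by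
  by_contra hcon
  push_neg at hcon
  have hfilt : IsFilt {e : C | ∃ c, a ≤ f c ∧ ∃ d, g d ≤ b ∧ c ⊓ dᶜ ≤ e} := by
    refine ⟨⟨⊤, by simpa using le_top, ⊥, by simpa using bot_le, le_top⟩, ?_, ?_⟩
    · rintro e1 ⟨c1, hc1, d1, hd1, h1⟩ e2 ⟨c2, hc2, d2, hd2, h2⟩
      refine ⟨c1 ⊓ c2, le_inf hc1 hc2 |>.trans (map_inf f c1 c2).ge, d1 ⊔ d2,
        by rw [map_sup]; exact sup_le hd1 hd2, ?_⟩
      · rw [compl_sup]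
        refine le_inf ?_ ?_
        · refine le_trans ?_ h1
          exact inf_le_inf inf_le_left inf_le_left
        · refine le_trans ?_ h2
          exact inf_le_inf inf_le_right inf_le_right
    · rintro e ⟨c, hc, d, hd, hle⟩ e' he
      exact ⟨c, hc, d, hd, hle.trans he⟩
  have hbot : (⊥ : C) ∉ {e : C | ∃ c, a ≤ f c ∧ ∃ d, g d ≤ b ∧ c ⊓ dᶜ ≤ e} := by
    rintro ⟨c, hc, d, hd, hle⟩
    have hcd : c ≤ d := by
      have : c ⊓ dᶜ = ⊥ := le_bot_iff.mp hle
      have hdis : Disjoint c dᶜ := disjoint_iff.mpr this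
      simpa using hdis.le_compl_right
    exact hcon d (hc.trans (OrderHomClass.mono f hcd)) hd
  obtain ⟨u, hu⟩ := exists_ultra _ hfilt hbot
  have hnb : ∀ c, u c → ¬ g c ≤ b := by
    intro c huc hgc
    have : u cᶜ := hu _ ⟨⊤, by simpa using le_top, c, hgc, inf_le_right⟩
    exact (hom_compl_iff u c).mp this huc
  have hxpro : ∀ c, u c → a ⊓ f c ≠ ⊥ := by
    intro c huc hb'
    have hafc : a ≤ f cᶜ := by
      rw [map_compl']
      exact (disjoint_iff.mpr hb').le_compl_right
    have : u cᶜ := hu _ ⟨cᶜ, hafc, ⊥, by simpa using bot_le, by simpa using le_refl cᶜ⟩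
    exact (hom_compl_iff u c).mp this huc
  obtain ⟨x, hxa, hxg⟩ := exists_extend f u a hxpro
  have hypro : ∀ c, u c → bᶜ ⊓ g c ≠ ⊥ := by
    intro c huc hb'
    have : g c ≤ b := by
      have hdis : Disjoint bᶜ (g c) := disjoint_iff.mpr hb'
      have := hdis.symm.le_compl_right
      rwa [compl_compl] at this
    exact hnb c huc this
  obtain ⟨y, hyb, hyg⟩ := exists_extend g u bᶜ hypro
  have hcomp : x.comp f = y.comp g := by
    ext c
    simp only [BoundedLatticeHom.comp_apply]
    exact (hxg c).trans (hyg c).symm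
  exact (hom_compl_iff y b).mp hyb (h x y hcomp hxa)

theorem inj_of_ker {β : Type*} [BooleanAlgebra β] (h : BoundedLatticeHom α β)
    (hk : ∀ a, h a = ⊥ → a = ⊥) : Function.Injective h := by
  intro a b hab
  have h1 : h (a ∆ b) = ⊥ := by rw [map_symmDiff', hab, symmDiff_self]
  exact symmDiff_eq_bot.mp (hk _ h1)

theorem hom_le_reflect {β : Type*} [BooleanAlgebra β] (h : BoundedLatticeHom α β)
    (hinj : Function.Injective h) {a b : α} (hle : h a ≤ h b) : a ≤ b := by
  have : h (a ⊓ b) = h a := by rw [map_inf]; exact inf_eq_left.mpr hle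
  exact inf_eq_left.mp (hinj this)

/-- Evaluation homomorphism into a powerset algebra. -/
def evalHom {Z : Type*} (e : Z → BoundedLatticeHom α Prop) :
    BoundedLatticeHom α (Set Z) where
  toFun a := {z | e z a}
  map_sup' a b := by
    ext z
    simp only [Set.mem_setOf_eq, map_sup, Set.sup_eq_union, Set.mem_union]
    exact Iff.rfl
  map_inf' a b := by
    ext z
    simp only [Set.mem_setOf_eq, map_inf, Set.inf_eq_inter, Set.mem_inter_iff]
    exact Iff.rfl
  map_top' := by
    ext z
    simp only [Set.mem_setOf_eq, map_top, Set.top_eq_univ, Set.mem_univ, iff_true]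
    trivial
  map_bot' := by
    ext z
    simp only [Set.mem_setOf_eq, map_bot, Set.bot_eq_empty, Set.mem_empty_iff_false,
      iff_false]
    exact id

@[simp] theorem evalHom_mem {Z : Type*} (e : Z → BoundedLatticeHom α Prop) (a : α)
    (z : Z) : z ∈ evalHom e a ↔ e z a := Iff.rfl

end Aux

/-- Boolean algebras have disjoint amalgamation: two injective homomorphisms out of a
common Boolean algebra `C` can be amalgamated by injective homomorphisms into a Boolean
algebra `D` whose images intersect exactly in the image of `C`. -/
theorem boolean_algebra_disjoint_amalgamation
    {A : Type u} {B : Type v} {C : Type w}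
    [BooleanAlgebra A] [BooleanAlgebra B] [BooleanAlgebra C]
    (f : BoundedLatticeHom C A) (g : BoundedLatticeHom C B)
    (hf : Function.Injective f) (hg : Function.Injective g) :
    ∃ (D : Type (max u v w)) (_ : BooleanAlgebra D)
      (i₁ : BoundedLatticeHom A D) (i₂ : BoundedLatticeHom B D),
      Function.Injective i₁ ∧ Function.Injective i₂ ∧
      (∀ c : C, i₁ (f c) = i₂ (g c)) ∧
      Set.range ⇑i₁ ∩ Set.range ⇑i₂ = Set.range fun c : C => i₁ (f c) := by
  classical
  set Z := ULift.{w} {p : BoundedLatticeHom A Prop × BoundedLatticeHom B Prop //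
      p.1.comp f = p.2.comp g} with hZ
  set i₁ : BoundedLatticeHom A (Set Z) := evalHom (fun z => z.down.1.1) with hi₁
  set i₂ : BoundedLatticeHom B (Set Z) := evalHom (fun z => z.down.1.2) with hi₂
  -- commutativity
  have hcomm : ∀ c : C, i₁ (f c) = i₂ (g c) := by
    intro c
    ext z
    have := DFunLike.congr_fun z.down.2 c
    simp only [BoundedLatticeHom.comp_apply] at this
    exact iff_of_eq this
  -- building points of Z over any ultrafilter on A
  have hpoint : ∀ x : BoundedLatticeHom A Prop,
      ∃ z : Z, z.down.1.1 = x := by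
    intro x
    have hpro : ∀ c, (x.comp f) c → (⊤ : B) ⊓ g c ≠ ⊥ := by
      intro c hc hb
      rw [top_inf_eq] at hb
      have hcbot : c = ⊥ := hg (by rw [hb, map_bot])
      rw [hcbot] at hc
      simp only [BoundedLatticeHom.comp_apply, map_bot] at hc
      exact hc
    obtain ⟨y, -, hyg⟩ := exists_extend g (x.comp f) ⊤ hpro
    have : x.comp f = y.comp g := by
      ext c
      simp only [BoundedLatticeHom.comp_apply]
      exact (hyg c).symm
    exact ⟨ULift.up ⟨(x, y), this⟩, rfl⟩
  have hpoint' : ∀ y : BoundedLatticeHom B Prop,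
      ∃ z : Z, z.down.1.2 = y := by
    intro y
    have hpro : ∀ c, (y.comp g) c → (⊤ : A) ⊓ f c ≠ ⊥ := by
      intro c hc hb
      rw [top_inf_eq] at hb
      have hcbot : c = ⊥ := hf (by rw [hb, map_bot])
      rw [hcbot] at hc
      simp only [BoundedLatticeHom.comp_apply, map_bot] at hc
      exact hc
    obtain ⟨x, -, hxf⟩ := exists_extend f (y.comp g) ⊤ hpro
    have : x.comp f = y.comp g := by
      ext c
      simp only [BoundedLatticeHom.comp_apply]
      exact hxf c
    exact ⟨ULift.up ⟨(x, y), this⟩, rfl⟩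
  -- injectivity of i₁
  have hinj₁ : Function.Injective i₁ := by
    apply inj_of_ker
    intro a ha
    by_contra hab
    have hfilt : IsFilt {w : A | a ≤ w} := by
      refine ⟨le_top, ?_, ?_⟩
      · intro x hx y hy; exact le_inf hx hy
      · intro x hx y hxy; exact hx.trans hxy
    have hb : (⊥ : A) ∉ {w : A | a ≤ w} := fun hle => hab (le_bot_iff.mp hle)
    obtain ⟨x, hx⟩ := exists_ultra _ hfilt hb
    obtain ⟨z, hz⟩ := hpoint x
    have hmem : z ∈ i₁ a := by
      rw [hi₁, evalHom_mem, hz]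
      exact hx a le_rfl
    rw [ha] at hmem
    exact hmem
  have hinj₂ : Function.Injective i₂ := by
    apply inj_of_ker
    intro b hb
    by_contra hbb
    have hfilt : IsFilt {w : B | b ≤ w} := by
      refine ⟨le_top, ?_, ?_⟩
      · intro x hx y hy; exact le_inf hx hy
      · intro x hx y hxy; exact hx.trans hxy
    have hb' : (⊥ : B) ∉ {w : B | b ≤ w} := fun hle => hbb (le_bot_iff.mp hle)
    obtain ⟨y, hy⟩ := exists_ultra _ hfilt hb'
    obtain ⟨z, hz⟩ := hpoint' y
    have hmem : z ∈ i₂ b := by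
      rw [hi₂, evalHom_mem, hz]
      exact hy b le_rfl
    rw [hb] at hmem
    exact hmem
  refine ⟨Set Z, inferInstance, i₁, i₂, hinj₁, hinj₂, hcomm, ?_⟩
  apply Set.eq_of_subset_of_subset
  · rintro d ⟨⟨a, ha⟩, ⟨b, hb⟩⟩
    have hiab : i₁ a = i₂ b := by rw [ha, hb]
    have h1 : ∀ (x : BoundedLatticeHom A Prop) (y : BoundedLatticeHom B Prop),
        x.comp f = y.comp g → x a → y b := by
      intro x y hxy hxa
      have hz : (ULift.up ⟨(x, y), hxy⟩ : Z) ∈ i₁ a := hxa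
      rw [hiab] at hz
      exact hz
    have h2 : ∀ (y : BoundedLatticeHom B Prop) (x : BoundedLatticeHom A Prop),
        y.comp g = x.comp f → y b → x a := by
      intro y x hxy hyb
      have hz : (ULift.up ⟨(x, y), hxy.symm⟩ : Z) ∈ i₂ b := hyb
      rw [← hiab] at hz
      exact hz
    obtain ⟨c1, hc1a, hc1b⟩ := interp f g a b h1
    obtain ⟨c2, hc2b, hc2a⟩ := interp g f b a h2
    have h12 : c1 ≤ c2 := hom_le_reflect g hg (hc1b.trans hc2b)
    have h21 : c2 ≤ c1 := hom_le_reflect f hf (hc2a.trans hc1a)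
    have hceq : c1 = c2 := le_antisymm h12 h21
    have hafc : a = f c1 := le_antisymm hc1a (hceq ▸ hc2a)
    exact ⟨c1, by show i₁ (f c1) = d; rw [← hafc]; exact ha⟩
  · rintro d ⟨c, rfl⟩
    exact ⟨⟨f c, rfl⟩, ⟨g c, (hcomm c).symm⟩⟩
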